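/- Let A₀, A₁, A₂, … be nonempty compact subsets of ℝ such that gap(Aᵢ) ≤ diam(A_{i+1}) for every i ∈ ℕ, and assume the infinite Minkowski sum A = Σ_{i∈ℕ} Aᵢ exists as the limit of the partial sums in the Hausdorff metric. Then A is an interval. -/

import Mathlib

open Pointwise

/-- The length of the longest bounded interval complementary to `A`:
`gap A = min {ℓ ≥ 0 : A + [0,ℓ] is an interval}`. -/
noncomputable def gap (A : Set ℝ) : ℝ :=
  sInf {ℓ : ℝ | 0 ≤ ℓ ∧ (A + Set.Icc 0 ℓ).OrdConnected}

namespace GapAux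

open Set

/-- The set of admissible gap lengths. -/
def gapSet (A : Set ℝ) : Set ℝ := {ℓ : ℝ | 0 ≤ ℓ ∧ (A + Set.Icc 0 ℓ).OrdConnected}

lemma gap_eq (A : Set ℝ) : gap A = sInf (gapSet A) := rfl

variable {A B : Set ℝ} {ℓ ℓ' : ℝ}

lemma subset_Icc (hA : IsCompact A) (hAne : A.Nonempty) (hl : 0 ≤ ℓ) :
    A + Icc 0 ℓ ⊆ Icc (sInf A) (sSup A + ℓ) := by
  rintro x hx
  obtain ⟨α, hα, t, ht, rfl⟩ := Set.mem_add.1 hx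
  simp only [Set.mem_Icc] at ht ⊢
  constructor
  · have := csInf_le hA.bddBelow hα; linarith [ht.1]
  · have := le_csSup hA.bddAbove hα; linarith [ht.2]

lemma eq_Icc_of_ordConnected (hA : IsCompact A) (hAne : A.Nonempty) (hl : 0 ≤ ℓ)
    (h : (A + Icc 0 ℓ).OrdConnected) :
    A + Icc 0 ℓ = Icc (sInf A) (sSup A + ℓ) := by
  refine Subset.antisymm (subset_Icc hA hAne hl) ?_
  have h1 : sInf A ∈ A + Icc 0 ℓ :=
    Set.mem_add.2 ⟨sInf A, hA.sInf_mem hAne, 0, ⟨le_refl 0, hl⟩, by ring⟩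
  have h2 : sSup A + ℓ ∈ A + Icc 0 ℓ :=
    Set.mem_add.2 ⟨sSup A, hA.sSup_mem hAne, ℓ, ⟨hl, le_refl ℓ⟩, rfl⟩
  exact h.out h1 h2

/-- A helper: to prove ord-connectedness of `A + Icc 0 ℓ` it suffices to show every point
of the enclosing interval that lies between two points of the set is in the set. -/
lemma ordConnected_of_Icc_subset (hA : IsCompact A) (hAne : A.Nonempty) (hl : 0 ≤ ℓ)
    (H : ∀ y ∈ Icc (sInf A) (sSup A + ℓ), y ∈ A + Icc 0 ℓ) :
    (A + Icc 0 ℓ).OrdConnected := by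
  constructor
  intro x hx z hz w hw
  apply H
  have hx' := subset_Icc hA hAne hl hx
  have hz' := subset_Icc hA hAne hl hz
  exact ⟨hx'.1.trans hw.1, hw.2.trans hz'.2⟩

lemma ordConnected_mono (hA : IsCompact A) (hAne : A.Nonempty) (hl : 0 ≤ ℓ)
    (h : (A + Icc 0 ℓ).OrdConnected) (hll' : ℓ ≤ ℓ') :
    (A + Icc 0 ℓ').OrdConnected := by
  have hl' : 0 ≤ ℓ' := hl.trans hll'
  refine ordConnected_of_Icc_subset hA hAne hl' ?_
  intro y hy
  rcases le_total y (sSup A + ℓ) with h1 | h1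
  · have hy' : y ∈ A + Icc 0 ℓ := by
      rw [eq_Icc_of_ordConnected hA hAne hl h]; exact ⟨hy.1, h1⟩
    obtain ⟨α, hα, t, ht, rfl⟩ := Set.mem_add.1 hy'
    exact Set.mem_add.2 ⟨α, hα, t, ⟨ht.1, ht.2.trans hll'⟩, rfl⟩
  · exact Set.mem_add.2 ⟨sSup A, hA.sSup_mem hAne, y - sSup A,
      ⟨by linarith, by linarith [hy.2]⟩, by ring⟩

lemma diam_mem_gapSet (hA : IsCompact A) (hAne : A.Nonempty) :
    sSup A - sInf A ∈ gapSet A := by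
  have hd : (0:ℝ) ≤ sSup A - sInf A :=
    sub_nonneg.2 (csInf_le_csSup hAne hA.bddBelow hA.bddAbove)
  refine ⟨hd, ordConnected_of_Icc_subset hA hAne hd ?_⟩
  intro y hy
  rcases le_total y (sSup A) with h1 | h1
  · exact Set.mem_add.2 ⟨sInf A, hA.sInf_mem hAne, y - sInf A,
      ⟨by linarith [hy.1], by linarith⟩, by ring⟩
  · exact Set.mem_add.2 ⟨sSup A, hA.sSup_mem hAne, y - sSup A,
      ⟨by linarith, by linarith [hy.2]⟩, by ring⟩

lemma gapSet_nonempty (hA : IsCompact A) (hAne : A.Nonempty) : (gapSet A).Nonempty :=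
  ⟨_, diam_mem_gapSet hA hAne⟩

lemma gapSet_bddBelow (A : Set ℝ) : BddBelow (gapSet A) :=
  ⟨0, fun _ h => h.1⟩

lemma gap_nonneg (hA : IsCompact A) (hAne : A.Nonempty) : 0 ≤ gap A :=
  le_csInf (gapSet_nonempty hA hAne) fun _ h => h.1

/-- The infimum in the definition of `gap` is attained. -/
lemma gap_mem (hA : IsCompact A) (hAne : A.Nonempty) : gap A ∈ gapSet A := by
  have hGne := gapSet_nonempty hA hAne
  have hg0 := gap_nonneg hA hAne
  refine ⟨hg0, ?_⟩
  constructor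
  intro x hx z hz y hy
  -- For every ℓ ∈ gapSet A, y ∈ A + Icc 0 ℓ.
  have hmem : ∀ ℓ ∈ gapSet A, y ∈ A + Icc 0 ℓ := by
    intro ℓ hℓ
    have hsub : A + Icc 0 (gap A) ⊆ A + Icc 0 ℓ :=
      Set.add_subset_add_left (Icc_subset_Icc le_rfl (csInf_le (gapSet_bddBelow A) hℓ))
    exact hℓ.2.out (hsub hx) (hsub hz) hy
  -- Take the largest element of A below y.
  obtain ⟨ℓ₀, hℓ₀⟩ := hGne
  obtain ⟨α₀, hα₀, t₀, ht₀, hαt₀⟩ := Set.mem_add.1 (hmem ℓ₀ hℓ₀)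
  have hTne : (A ∩ Iic y).Nonempty := ⟨α₀, hα₀, by simp only [Set.mem_Iic]; linarith [ht₀.1]⟩
  have hTcomp : IsCompact (A ∩ Iic y) := hA.inter_right isClosed_Iic
  set α := sSup (A ∩ Iic y) with hα
  have hαT : α ∈ A ∩ Iic y := hTcomp.sSup_mem hTne
  have hclaim : y - α ≤ gap A := by
    refine le_csInf (gapSet_nonempty hA hAne) ?_
    intro ℓ hℓ
    obtain ⟨β, hβ, t, ht, hβt⟩ := Set.mem_add.1 (hmem ℓ hℓ)
    have hβT : β ∈ A ∩ Iic y := ⟨hβ, by simp only [Set.mem_Iic]; linarith [ht.1]⟩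
    have := le_csSup hTcomp.bddAbove hβT
    simp only [Set.mem_Icc] at ht
    linarith
  exact Set.mem_add.2 ⟨α, hαT.1, y - α, ⟨sub_nonneg.2 hαT.2, hclaim⟩, by ring⟩

lemma sInf_add_eq (hA : IsCompact A) (hAne : A.Nonempty) (hB : IsCompact B)
    (hBne : B.Nonempty) : sInf (A + B) = sInf A + sInf B := by
  refine le_antisymm ?_ ?_
  · exact csInf_le (hA.add hB).bddBelow (Set.add_mem_add (hA.sInf_mem hAne) (hB.sInf_mem hBne))
  · refine le_csInf (hAne.add hBne) ?_
    rintro x hx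
    obtain ⟨a, ha, b, hb, rfl⟩ := Set.mem_add.1 hx
    exact add_le_add (csInf_le hA.bddBelow ha) (csInf_le hB.bddBelow hb)

lemma sSup_add_eq (hA : IsCompact A) (hAne : A.Nonempty) (hB : IsCompact B)
    (hBne : B.Nonempty) : sSup (A + B) = sSup A + sSup B := by
  refine le_antisymm ?_ ?_
  · refine csSup_le (hAne.add hBne) ?_
    rintro x hx
    obtain ⟨a, ha, b, hb, rfl⟩ := Set.mem_add.1 hx
    exact add_le_add (le_csSup hA.bddAbove ha) (le_csSup hB.bddAbove hb)
  · exact le_csSup (hA.add hB).bddAbove (Set.add_mem_add (hA.sSup_mem hAne) (hB.sSup_mem hBne))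

/-- Key lemma: if `gap A ≤ diam B` and `ℓ` is admissible for `B`, then `ℓ` is admissible
for `A + B`. -/
lemma key (hA : IsCompact A) (hAne : A.Nonempty) (hB : IsCompact B) (hBne : B.Nonempty)
    (hg : gap A ≤ sSup B - sInf B) (hl : 0 ≤ ℓ) (hord : (B + Icc 0 ℓ).OrdConnected) :
    (A + B + Icc 0 ℓ).OrdConnected := by
  have hAB : IsCompact (A + B) := hA.add hB
  have hABne : (A + B).Nonempty := hAne.add hBne
  have hg0 : 0 ≤ gap A := gap_nonneg hA hAne
  have hd : (0:ℝ) ≤ sSup B - sInf B := hg0.trans hg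
  refine ordConnected_of_Icc_subset hAB hABne hl ?_
  rw [sInf_add_eq hA hAne hB hBne, sSup_add_eq hA hAne hB hBne]
  intro y hy
  have h1 : (A + Icc 0 (sSup B - sInf B + ℓ)).OrdConnected :=
    ordConnected_mono hA hAne hg0 (gap_mem hA hAne).2 (by linarith)
  have h2 : y - sInf B ∈ A + Icc 0 (sSup B - sInf B + ℓ) := by
    rw [eq_Icc_of_ordConnected hA hAne (by linarith) h1]
    exact ⟨by linarith [hy.1], by linarith [hy.2]⟩
  obtain ⟨α, hα, t, ht, hαt⟩ := Set.mem_add.1 h2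
  simp only [Set.mem_Icc] at ht
  have h3 : y - α ∈ B + Icc 0 ℓ := by
    rw [eq_Icc_of_ordConnected hB hBne hl hord]
    exact ⟨by linarith [ht.1], by linarith [ht.2]⟩
  obtain ⟨β, hβ, s, hs, hβs⟩ := Set.mem_add.1 h3
  exact Set.mem_add.2 ⟨α + β, Set.add_mem_add hα hβ, s, hs, by linarith⟩

end GapAux

open GapAux Set

theorem interval_of_minkowski_tsum (A : ℕ → Set ℝ)
    (hcomp : ∀ i, IsCompact (A i)) (hne : ∀ i, (A i).Nonempty)
    (hgap : ∀ i, gap (A i) ≤ Metric.diam (A (i + 1)))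
    (S : Set ℝ) (hS : IsCompact S) (hSne : S.Nonempty)
    (hlim : Filter.Tendsto
      (fun n => Metric.hausdorffDist (∑ i ∈ Finset.range (n + 1), A i) S)
      Filter.atTop (nhds 0)) :
    S.OrdConnected := by
  classical
  set Sn : ℕ → Set ℝ := fun n => ∑ i ∈ Finset.range (n + 1), A i with hSndef
  have hSsucc : ∀ n, Sn (n + 1) = Sn n + A (n + 1) := by
    intro n
    simp only [hSndef, Finset.sum_range_succ]
  have hS0 : Sn 0 = A 0 := by simp [hSndef]
  have hScomp : ∀ n, IsCompact (Sn n) := by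
    intro n; induction n with
    | zero => rw [hS0]; exact hcomp 0
    | succ n ih => rw [hSsucc]; exact ih.add (hcomp (n + 1))
  have hSnne : ∀ n, (Sn n).Nonempty := by
    intro n; induction n with
    | zero => rw [hS0]; exact hne 0
    | succ n ih => rw [hSsucc]; exact ih.add (hne (n + 1))
  -- restate hgap in terms of sSup - sInf
  have hgap' : ∀ i, gap (A i) ≤ sSup (A (i + 1)) - sInf (A (i + 1)) := by
    intro i
    have := hgap i
    rwa [Real.diam_eq (hcomp (i + 1)).isBounded] at this
  -- gapSet inclusion by induction
  have hgapSet : ∀ n, gapSet (A n) ⊆ gapSet (Sn n) := by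
    intro n; induction n with
    | zero => rw [hS0]
    | succ n ih =>
      intro ℓ hℓ
      have hgapSn : gap (Sn n) ≤ gap (A n) :=
        csInf_le_csInf (gapSet_bddBelow _) (gapSet_nonempty (hcomp n) (hne n)) ih
      refine ⟨hℓ.1, ?_⟩
      rw [hSsucc]
      exact key (hScomp n) (hSnne n) (hcomp (n + 1)) (hne (n + 1))
        (hgapSn.trans (hgap' n)) hℓ.1 hℓ.2
  have hgapSle : ∀ n, gap (Sn n) ≤ sSup (A (n + 1)) - sInf (A (n + 1)) := by
    intro n
    have hgapSn : gap (Sn n) ≤ gap (A n) :=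
      csInf_le_csInf (gapSet_bddBelow _) (gapSet_nonempty (hcomp n) (hne n)) (hgapSet n)
    exact hgapSn.trans (hgap' n)
  -- hausdorffEdist finiteness
  have hfin : ∀ n, EMetric.hausdorffEdist (Sn n) S ≠ ⊤ := fun n =>
    Metric.hausdorffEdist_ne_top_of_nonempty_of_bounded (hSnne n) hSne
      (hScomp n).isBounded hS.isBounded
  -- diameters tend to zero
  set D : ℕ → ℝ := fun n => sSup (Sn n) - sInf (Sn n) with hDdef
  set dA : ℕ → ℝ := fun n => sSup (A (n + 1)) - sInf (A (n + 1)) with hdAdef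
  have hDrec : ∀ n, D (n + 1) = D n + dA n := by
    intro n
    simp only [hDdef, hdAdef, hSsucc n,
      sInf_add_eq (hScomp n) (hSnne n) (hcomp (n + 1)) (hne (n + 1)),
      sSup_add_eq (hScomp n) (hSnne n) (hcomp (n + 1)) (hne (n + 1))]
    ring
  have hdA0 : ∀ n, 0 ≤ dA n := fun n =>
    sub_nonneg.2 (csInf_le_csSup (hne (n + 1)) (hcomp (n + 1)).bddBelow (hcomp (n + 1)).bddAbove)
  have hDmono : Monotone D := by
    refine monotone_nat_of_le_succ fun n => ?_
    rw [hDrec n]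
    linarith [hdA0 n]
  -- boundedness of D
  obtain ⟨N, hN⟩ := Filter.eventually_atTop.1 (hlim.eventually (gt_mem_nhds one_pos))
  have hDbound : ∀ n, N ≤ n → D n ≤ sSup S - sInf S + 2 := by
    intro n hn
    have h1 := hN n hn
    obtain ⟨s1, hs1, hd1⟩ :=
      Metric.exists_dist_lt_of_hausdorffDist_lt ((hScomp n).sSup_mem (hSnne n)) h1 (hfin n)
    obtain ⟨s2, hs2, hd2⟩ :=
      Metric.exists_dist_lt_of_hausdorffDist_lt ((hScomp n).sInf_mem (hSnne n)) h1 (hfin n)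
    rw [Real.dist_eq, abs_lt] at hd1 hd2
    have hb1 : s1 ≤ sSup S := le_csSup hS.bddAbove hs1
    have hb2 : sInf S ≤ s2 := csInf_le hS.bddBelow hs2
    simp only [hDdef]
    linarith [hd1.2, hd2.1]
  have hDbddAbove : BddAbove (Set.range D) := by
    refine ⟨sSup S - sInf S + 2, ?_⟩
    rintro _ ⟨n, rfl⟩
    exact (hDmono (le_max_left n N)).trans (hDbound _ (le_max_right n N))
  have hDtend : Filter.Tendsto D Filter.atTop (nhds (⨆ n, D n)) :=
    tendsto_atTop_ciSup hDmono hDbddAbove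
  have hDtend' : Filter.Tendsto (fun n => D (n + 1)) Filter.atTop (nhds (⨆ n, D n)) :=
    hDtend.comp (Filter.tendsto_add_atTop_nat 1)
  have hdAtend : Filter.Tendsto dA Filter.atTop (nhds 0) := by
    have h := hDtend'.sub hDtend
    rw [sub_self] at h
    refine h.congr fun n => ?_
    rw [hDrec n]; ring
  -- main argument
  constructor
  intro x hx z hz y hy
  have hyc : y ∈ closure S := by
    rw [Metric.mem_closure_iff]
    intro ε hε
    have h1 : ∀ᶠ n in Filter.atTop, Metric.hausdorffDist (Sn n) S < ε / 4 :=
      hlim.eventually (gt_mem_nhds (by positivity))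
    have h2 : ∀ᶠ n in Filter.atTop, dA n < ε / 4 :=
      hdAtend.eventually (gt_mem_nhds (by positivity))
    obtain ⟨n, hn1, hn2⟩ := (h1.and h2).exists
    set g := gap (Sn n) with hgdef
    have hg0 : 0 ≤ g := gap_nonneg (hScomp n) (hSnne n)
    have hgε : g < ε / 4 := lt_of_le_of_lt (hgapSle n) hn2
    have hEq : Sn n + Icc 0 g = Icc (sInf (Sn n)) (sSup (Sn n) + g) :=
      eq_Icc_of_ordConnected (hScomp n) (hSnne n) hg0 (gap_mem (hScomp n) (hSnne n)).2
    have hnear : ∃ w ∈ Sn n, |y - w| ≤ g + ε / 4 := by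
      rcases lt_or_ge y (sInf (Sn n)) with hc | hc
      · obtain ⟨x', hx', hdx⟩ :=
          Metric.exists_dist_lt_of_hausdorffDist_lt' hx hn1 (hfin n)
        refine ⟨sInf (Sn n), (hScomp n).sInf_mem (hSnne n), ?_⟩
        have hx'i : sInf (Sn n) ≤ x' := csInf_le (hScomp n).bddBelow hx'
        rw [Real.dist_eq, abs_lt] at hdx
        rw [abs_le]
        constructor <;> [linarith [hy.1, hdx.1]; linarith]
      · rcases le_or_gt y (sSup (Sn n) + g) with hc2 | hc2
        · have hyIcc : y ∈ Sn n + Icc 0 g := by rw [hEq]; exact ⟨hc, hc2⟩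
          obtain ⟨w, hw, t, ht, hwt⟩ := Set.mem_add.1 hyIcc
          refine ⟨w, hw, ?_⟩
          simp only [Set.mem_Icc] at ht
          have : y - w = t := by linarith
          rw [this, abs_le]
          exact ⟨by linarith [ht.1], by linarith [ht.2]⟩
        · obtain ⟨z', hz', hdz⟩ :=
            Metric.exists_dist_lt_of_hausdorffDist_lt' hz hn1 (hfin n)
          refine ⟨sSup (Sn n), (hScomp n).sSup_mem (hSnne n), ?_⟩
          have hz'i : z' ≤ sSup (Sn n) := le_csSup (hScomp n).bddAbove hz'
          rw [Real.dist_eq, abs_lt] at hdz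
          rw [abs_le]
          exact ⟨by linarith, by linarith [hy.2, hdz.1, hz'i]⟩
    obtain ⟨w, hw, hwd⟩ := hnear
    obtain ⟨s, hs, hds⟩ := Metric.exists_dist_lt_of_hausdorffDist_lt hw hn1 (hfin n)
    refine ⟨s, hs, ?_⟩
    calc dist y s ≤ dist y w + dist w s := dist_triangle y w s
      _ = |y - w| + dist w s := by rw [Real.dist_eq]
      _ < (g + ε / 4) + ε / 4 := by linarith
      _ < ε := by linarith
  rwa [hS.isClosed.closure_eq] at hyc
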